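/- Suppose μ is a regular cardinal, λ > μ is inaccessible, Q = Col(μ, <λ) is the Levy collapse, and D is a normal filter on λ. Let T ∈ D⁺ and let p̄ = ⟨p_i : i ∈ T⟩ be a sequence of conditions in Q. Then there is C ∈ D such that for every i ∈ T ∩ C, p_i forces that τ_p̄ = {i : p_i ∈ G} belongs to (D^Q)⁺. -/

import Mathlib

open Set Cardinal

noncomputable section

/-! ## Normal filters on the ordinals below `lam`, positive sets, antichains,
presaturation (Baumgartner–Taylor / Gitik–Shelah) -/

/-- A normal filter on (the set of ordinals below) `lam`:  a proper,
`lam`-complete filter on `Set.Iio lam` containing all final segments and closed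
under diagonal intersections. -/
structure NormalFilterOn (lam : Ordinal.{0}) where
  sets : Set (Set Ordinal.{0})
  subset_field : ∀ A ∈ sets, A ⊆ Set.Iio lam
  superset_mem : ∀ A ∈ sets, ∀ B, B ⊆ Set.Iio lam → A ⊆ B → B ∈ sets
  inter_mem : ∀ A ∈ sets, ∀ B ∈ sets, A ∩ B ∈ sets
  tail_mem : ∀ a, a < lam → {x : Ordinal.{0} | a ≤ x ∧ x < lam} ∈ sets
  complete : ∀ b, b < lam → ∀ s : Ordinal.{0} → Set Ordinal.{0},
    (∀ i, i < b → s i ∈ sets) → {x : Ordinal.{0} | x < lam ∧ ∀ i, i < b → x ∈ s i} ∈ sets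
  diagonal : ∀ s : Ordinal.{0} → Set Ordinal.{0}, (∀ i, i < lam → s i ∈ sets) →
    {x : Ordinal.{0} | x < lam ∧ ∀ i, i < x → x ∈ s i} ∈ sets
  proper : ∅ ∉ sets

/-- `A` is `D`-positive, i.e. `A ∈ D⁺`. -/
def NormalFilterOn.pos {lam : Ordinal.{0}} (D : NormalFilterOn lam) (A : Set Ordinal.{0}) : Prop :=
  A ⊆ Set.Iio lam ∧ (Set.Iio lam \ A) ∉ D.sets

/-- `A` has cardinality at most `|c|` (it injects into the ordinals below `c`). -/
def SizeLE {α : Type*} (A : Set α) (c : Ordinal.{0}) : Prop :=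
  ∃ g : α → Ordinal.{0}, (∀ x ∈ A, g x < c) ∧ ∀ x ∈ A, ∀ y ∈ A, g x = g y → x = y

/-- `A` has cardinality less than `|c|`. -/
def SizeLT {α : Type*} (A : Set α) (c : Ordinal.{0}) : Prop :=
  ∃ b, b < c ∧ SizeLE A b

/-- `⟨A i : i < i0⟩` is a maximal antichain of `D⁺`. -/
def IsMaxAntichainSeq {lam : Ordinal.{0}} (D : NormalFilterOn lam) (i0 : Ordinal.{0})
    (A : Ordinal.{0} → Set Ordinal.{0}) : Prop :=
  (∀ i, i < i0 → D.pos (A i)) ∧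
  (∀ i, i < i0 → ∀ j, j < i0 → i ≠ j → ¬ D.pos (A i ∩ A j)) ∧
  (∀ B, D.pos B → ∃ i, i < i0 ∧ D.pos (B ∩ A i))

/-- A family of sets forming a maximal antichain of `D⁺`. -/
def IsMaxAntichainSet {lam : Ordinal.{0}} (D : NormalFilterOn lam) (S : Set (Set Ordinal.{0})) : Prop :=
  (∀ A ∈ S, D.pos A) ∧
  (∀ A ∈ S, ∀ B ∈ S, A ≠ B → ¬ D.pos (A ∩ B)) ∧
  (∀ B, D.pos B → ∃ A ∈ S, D.pos (B ∩ A))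

/-- `D` is `kappa`-presaturated (Definition 1.2):  given fewer than `kappa` many
maximal antichains of `D⁺` and a positive `B`, some positive `A* ⊆ B` meets at
most `lam` many members of each antichain positively. -/
def Presaturated {lam : Ordinal.{0}} (D : NormalFilterOn lam) (kappa : Ordinal.{0}) : Prop :=
  ∀ k0, k0 < kappa →
    ∀ (idx : Ordinal.{0} → Ordinal.{0}) (A : Ordinal.{0} → Ordinal.{0} → Set Ordinal.{0}),
      (∀ a, a < k0 → IsMaxAntichainSeq D (idx a) (A a)) →
      ∀ B, D.pos B → ∃ Astar, D.pos Astar ∧ Astar ⊆ B ∧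
        ∀ a, a < k0 → SizeLE {i : Ordinal.{0} | i < idx a ∧ D.pos (Astar ∩ A a i)} lam

/-! ## Clubs and stationary sets -/

/-- `c` is closed and unbounded in `d`. -/
def ClubIn (c : Set Ordinal.{0}) (d : Ordinal.{0}) : Prop :=
  (∀ b, b < d → ∃ i, i ∈ c ∧ b < i ∧ i < d) ∧
  (∀ x, x < d → x ≠ 0 → (∀ b, b < x → ∃ i, i ∈ c ∧ b < i ∧ i < x) → x ∈ c)

/-- `A` is stationary in `d`. -/
def StatIn (A : Set Ordinal.{0}) (d : Ordinal.{0}) : Prop :=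
  ∀ c, ClubIn c d → ∃ i, i ∈ c ∧ i ∈ A ∧ i < d

/-! ## Forcing notions, names for sets of ordinals, and the forcing relation
(dense-set semantics).  `le p q` means that `q` extends (is stronger than) `p`. -/

structure ForcingNotion where
  Cond : Type 1
  le : Cond → Cond → Prop
  le_refl : ∀ p, le p p
  le_trans : ∀ {p q r}, le p q → le q r → le p r
  one : Cond
  one_le : ∀ p, le one p

/-- A name for a set of ordinals: `σ i` is the set of conditions forcing `i ∈ σ`. -/
def SetName (P : ForcingNotion) : Type 1 := Ordinal.{0} → Set P.Cond

def IsSetName (P : ForcingNotion) (σ : SetName P) : Prop :=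
  ∀ i p q, p ∈ σ i → P.le p q → q ∈ σ i

/-- `q ⊩ i ∈ σ`. -/
def ForcesMem (P : ForcingNotion) (q : P.Cond) (σ : SetName P) (i : Ordinal.{0}) : Prop :=
  ∀ r, P.le q r → ∃ s, P.le r s ∧ s ∈ σ i

/-- `q ⊩ i ∉ σ`. -/
def ForcesNotMem (P : ForcingNotion) (q : P.Cond) (σ : SetName P) (i : Ordinal.{0}) : Prop :=
  ∀ r, P.le q r → r ∉ σ i

/-- The canonical name of a ground-model set of ordinals. -/
def groundName (P : ForcingNotion) (A : Set Ordinal.{0}) : SetName P := fun i => {_s | i ∈ A}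

/-- The name of the intersection of two names. -/
def interName (P : ForcingNotion) (σ τ : SetName P) : SetName P :=
  fun i => {s | ForcesMem P s σ i ∧ ForcesMem P s τ i}

/-- `q ⊩ σ ∈ (D^Q)⁺`, where `D^Q` is the filter that `D` generates in `V^Q`. -/
def ForcesPos {lam : Ordinal.{0}} (P : ForcingNotion) (D : NormalFilterOn lam)
    (q : P.Cond) (σ : SetName P) : Prop :=
  ∀ C ∈ D.sets, ∀ r, P.le q r → ∃ s, P.le r s ∧ ∃ i ∈ C, ForcesMem P s σ i

/-- `q ⊩ σ = ∅ mod D^Q` (equivalently `q ⊩ σ ∉ (D^Q)⁺`). -/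
def ForcesNotPos {lam : Ordinal.{0}} (P : ForcingNotion) (D : NormalFilterOn lam)
    (q : P.Cond) (σ : SetName P) : Prop :=
  ∀ r, P.le q r → ∃ s, P.le r s ∧ ∃ C ∈ D.sets, ∀ i ∈ C, ForcesNotMem P s σ i

/-- `q ⊩ σ ⊆ τ`. -/
def ForcesSubset (P : ForcingNotion) (q : P.Cond) (σ τ : SetName P) : Prop :=
  ∀ i t, P.le q t → ForcesMem P t σ i → ForcesMem P t τ i

/-- `q ⊩ σ ⊆ τ mod D^Q`. -/
def ForcesSubsetMod {lam : Ordinal.{0}} (P : ForcingNotion) (D : NormalFilterOn lam)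
    (q : P.Cond) (σ τ : SetName P) : Prop :=
  ∀ r, P.le q r → ∃ s, P.le r s ∧ ∃ C ∈ D.sets,
    ∀ i ∈ C, ∀ t, P.le s t → ForcesMem P t σ i → ForcesMem P t τ i

/-! ## Forced maximal antichains, and presaturation of `D^Q` in `V^Q` -/

/-- `q` forces that `⟨A i : i < idx⟩` is a maximal antichain of `(D^Q)⁺`. -/
def ForcedMaxAntichain {lam : Ordinal.{0}} (P : ForcingNotion) (D : NormalFilterOn lam)
    (q : P.Cond) (idx : Ordinal.{0}) (A : Ordinal.{0} → SetName P) : Prop :=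
  (∀ i, i < idx → ForcesPos P D q (A i)) ∧
  (∀ i, i < idx → ∀ j, j < idx → i ≠ j → ForcesNotPos P D q (interName P (A i) (A j))) ∧
  (∀ B : SetName P, ∀ r, P.le q r → ForcesPos P D r B →
    ∃ s, P.le r s ∧ ∃ i, i < idx ∧ ForcesPos P D s (interName P (A i) B))

/-- `D^Q` is `kappa`-presaturated in `V^Q`. -/
def ForcedPresaturated {lam : Ordinal.{0}} (P : ForcingNotion) (D : NormalFilterOn lam)
    (kappa : Ordinal.{0}) : Prop :=
  ∀ (q : P.Cond) (k0 : Ordinal.{0}), k0 < kappa →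
    ∀ (idx : Ordinal.{0} → Ordinal.{0}) (A : Ordinal.{0} → Ordinal.{0} → SetName P),
      (∀ a, a < k0 → ForcedMaxAntichain P D q (idx a) (A a)) →
      ∀ B : SetName P, ForcesPos P D q B →
        ∀ r, P.le q r → ∃ s, P.le r s ∧ ∃ Astar : SetName P,
          ForcesPos P D s Astar ∧ ForcesSubsetMod P D s Astar B ∧
          ∀ a, a < k0 → ∃ Y : Set Ordinal.{0}, SizeLE Y lam ∧
            ∀ i, i < idx a → i ∉ Y → ForcesNotPos P D s (interName P Astar (A a i))

/-! ## Completeness of forcings, names of functions, preservation of cardinals -/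

/-- `P` is `kappa`-complete (`kappa`-closed): increasing chains of length `< kappa`
have upper bounds. -/
def KappaClosed (P : ForcingNotion) (kappa : Ordinal.{0}) : Prop :=
  ∀ d, d < kappa → ∀ c : Ordinal.{0} → P.Cond,
    (∀ i j, i ≤ j → j < d → P.le (c i) (c j)) → ∃ ub, ∀ i, i < d → P.le (c i) ub

/-- `F` is (below `q`) a name of a function with domain `mu`:
`F x i` is the set of conditions forcing the value at `x` to be `i`. -/
def IsFunName (P : ForcingNotion) (q : P.Cond) (mu : Ordinal.{0})
    (F : Ordinal.{0} → Ordinal.{0} → Set P.Cond) : Prop :=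
  (∀ x i p r, p ∈ F x i → P.le p r → r ∈ F x i) ∧
  (∀ x, x < mu → ∀ r, P.le q r → ∃ s, P.le r s ∧ ∃ i, s ∈ F x i) ∧
  (∀ x i j s, s ∈ F x i → s ∈ F x j → i = j)

/-- `q` forces `F` to be a function from `mu` cofinally into `lam`. -/
def ForcesCofinalInto (P : ForcingNotion) (q : P.Cond) (mu lam : Ordinal.{0})
    (F : Ordinal.{0} → Ordinal.{0} → Set P.Cond) : Prop :=
  IsFunName P q mu F ∧ (∀ x i s, s ∈ F x i → i < lam) ∧
  (∀ b, b < lam → ∀ r, P.le q r → ∃ s, P.le r s ∧ ∃ x, x < mu ∧ ∃ i, b ≤ i ∧ s ∈ F x i)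

/-- `⊩_P "lam is regular"`. -/
def ForcesRegular (P : ForcingNotion) (lam : Ordinal.{0}) : Prop :=
  ∀ q mu F, mu < lam → ¬ ForcesCofinalInto P q mu lam F

/-- `q` forces `F` to be a surjection from `mu` onto `nu`. -/
def ForcesOnto (P : ForcingNotion) (q : P.Cond) (mu nu : Ordinal.{0})
    (F : Ordinal.{0} → Ordinal.{0} → Set P.Cond) : Prop :=
  IsFunName P q mu F ∧ (∀ x i s, s ∈ F x i → i < nu) ∧
  (∀ i, i < nu → ∀ r, P.le q r → ∃ s, P.le r s ∧ ∃ x, x < mu ∧ s ∈ F x i)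

/-- `⊩_P "nu remains a cardinal"`. -/
def PreservesCardinalForced (P : ForcingNotion) (nu : Ordinal.{0}) : Prop :=
  ∀ q mu F, mu < nu → ¬ ForcesOnto P q mu nu F

/-! ## Forced clubs and stationarity -/

/-- `q` forces the name `C` to be a club in `d`. -/
def ForcesClubIn (P : ForcingNotion) (q : P.Cond) (C : SetName P) (d : Ordinal.{0}) : Prop :=
  (∀ b, b < d → ∀ r, P.le q r → ∃ s, P.le r s ∧ ∃ i, b < i ∧ i < d ∧ ForcesMem P s C i) ∧
  (∀ x, x < d → x ≠ 0 → ∀ s, P.le q s →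
    (∀ b, b < x → ∀ t, P.le s t → ∃ u, P.le t u ∧ ∃ i, b < i ∧ i < x ∧ ForcesMem P u C i) →
    ForcesMem P s C x)

/-- `q ⊩ "σ is a stationary subset of d"`. -/
def ForcesStatIn (P : ForcingNotion) (q : P.Cond) (σ : SetName P) (d : Ordinal.{0}) : Prop :=
  ∀ r, P.le q r → ∀ C : SetName P, ForcesClubIn P r C d →
    ∃ s, P.le r s ∧ ∃ i, i < d ∧ ForcesMem P s σ i ∧ ForcesMem P s C i

/-- `q ⊩ "σ ∩ d is nonstationary in d"`. -/
def ForcesNonstatIn (P : ForcingNotion) (q : P.Cond) (σ : SetName P) (d : Ordinal.{0}) : Prop :=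
  ∀ r, P.le q r → ∃ s, P.le r s ∧ ∃ C : SetName P, ForcesClubIn P s C d ∧
    ∀ i, i < d → ∀ t, P.le s t → ¬ (ForcesMem P t σ i ∧ ForcesMem P t C i)

/-- `P` preserves stationarity of every `D`-positive set. -/
def PreservesStationarity {lam : Ordinal.{0}} (P : ForcingNotion) (D : NormalFilterOn lam) : Prop :=
  ∀ A, D.pos A → ∀ q, ForcesStatIn P q (groundName P A) lam

/-! ## The games `Gm(D,γ,a)` and `Gm⁺(D,γ,a)` of Definition 1.7 -/

def restrictPlay (f : Ordinal.{0} → Set Ordinal.{0}) (i : Ordinal.{0}) : Ordinal.{0} → Set Ordinal.{0} :=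
  fun j => if j < i then f j else ∅

/-- The move `A` is legal at stage `i` of a play `f`:  it is `D`-positive and
included mod `D` in all previous moves. -/
def LegalMove {lam : Ordinal.{0}} (D : NormalFilterOn lam) (f : Ordinal.{0} → Set Ordinal.{0})
    (i : Ordinal.{0}) (A : Set Ordinal.{0}) : Prop :=
  D.pos A ∧ ∀ j, j < i → ¬ D.pos (A \ f j)

def LegalBelow {lam : Ordinal.{0}} (D : NormalFilterOn lam) (f : Ordinal.{0} → Set Ordinal.{0})
    (i : Ordinal.{0}) : Prop :=
  ∀ j, j < i → LegalMove D f j (f j)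

/-- Player II has a winning strategy in `Gm(D,γ,a)` (player I moves at stages in `a`). -/
def IIWinsGm {lam : Ordinal.{0}} (D : NormalFilterOn lam) (γ : Ordinal.{0}) (a : Set Ordinal.{0}) : Prop :=
  ∃ S : Ordinal.{0} → (Ordinal.{0} → Set Ordinal.{0}) → Set Ordinal.{0},
    ∀ f : Ordinal.{0} → Set Ordinal.{0},
      (∀ i, i < γ → i ∉ a → f i = S i (restrictPlay f i)) →
      (∀ i, i < γ → i ∈ a → LegalBelow D f i → (∃ A, LegalMove D f i A) →
        LegalMove D f i (f i)) →
      ∀ i, i < γ → LegalBelow D f i → LegalMove D f i (f i)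

/-- Player II has a winning strategy in `Gm⁺(D,γ,a)`:  in addition the
intersection of the moves must be nonempty. -/
def IIWinsGmPlus {lam : Ordinal.{0}} (D : NormalFilterOn lam) (γ : Ordinal.{0}) (a : Set Ordinal.{0}) : Prop :=
  ∃ S : Ordinal.{0} → (Ordinal.{0} → Set Ordinal.{0}) → Set Ordinal.{0},
    ∀ f : Ordinal.{0} → Set Ordinal.{0},
      (∀ i, i < γ → i ∉ a → f i = S i (restrictPlay f i)) →
      (∀ i, i < γ → i ∈ a → LegalBelow D f i → (∃ A, LegalMove D f i A) →
        LegalMove D f i (f i)) →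
      (∀ i, i < γ → LegalBelow D f i → LegalMove D f i (f i)) ∧
      ((∀ i, i < γ → LegalMove D f i (f i)) → ∃ x, ∀ i, i < γ → x ∈ f i)

/-- Player I has a winning strategy in `Gm(D,γ,a)`. -/
def IWinsGm {lam : Ordinal.{0}} (D : NormalFilterOn lam) (γ : Ordinal.{0}) (a : Set Ordinal.{0}) : Prop :=
  ∃ S : Ordinal.{0} → (Ordinal.{0} → Set Ordinal.{0}) → Set Ordinal.{0},
    ∀ f : Ordinal.{0} → Set Ordinal.{0},
      (∀ i, i < γ → i ∈ a → f i = S i (restrictPlay f i)) →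
      (∀ i, i < γ → i ∉ a → LegalBelow D f i → (∃ A, LegalMove D f i A) →
        LegalMove D f i (f i)) →
      ∃ i, i < γ ∧ LegalBelow D f i ∧ ¬ LegalMove D f i (f i) ∧
        (i ∈ a → ¬ ∃ A, LegalMove D f i A)

/-- Player I has a winning strategy in `Gm⁺(D,γ,a)`. -/
def IWinsGmPlus {lam : Ordinal.{0}} (D : NormalFilterOn lam) (γ : Ordinal.{0}) (a : Set Ordinal.{0}) : Prop :=
  ∃ S : Ordinal.{0} → (Ordinal.{0} → Set Ordinal.{0}) → Set Ordinal.{0},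
    ∀ f : Ordinal.{0} → Set Ordinal.{0},
      (∀ i, i < γ → i ∈ a → f i = S i (restrictPlay f i)) →
      (∀ i, i < γ → i ∉ a → LegalBelow D f i → (∃ A, LegalMove D f i A) →
        LegalMove D f i (f i)) →
      (∃ i, i < γ ∧ LegalBelow D f i ∧ ¬ LegalMove D f i (f i) ∧
        (i ∈ a → ¬ ∃ A, LegalMove D f i A)) ∨
      ¬ ∃ x, ∀ i, i < γ → x ∈ f i

/-- The default set of stages at which player I moves:  `{1 + 2·i}`. -/
def oddStages : Set Ordinal.{0} := {i | ∃ j : Ordinal.{0}, i = 1 + 2 * j}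

/-! ## The games in the generic extension, rendered via names and conditions -/

def defaultPairMove (P : ForcingNotion) : P.Cond × SetName P := (P.one, fun _ => ∅)

def restrictAux (P : ForcingNotion) (g : Ordinal.{0} → P.Cond × SetName P) (i : Ordinal.{0}) :
    Ordinal.{0} → P.Cond × SetName P :=
  fun j => if j < i then g j else defaultPairMove P

/-- Legality of the decorated move `m = (condition, name)` at stage `i` of the
auxiliary play `g` interpreting the game `Gm(D^Q, …)` of `V^Q` below `q`. -/
def AuxLegal {lam : Ordinal.{0}} (P : ForcingNotion) (D : NormalFilterOn lam) (q : P.Cond)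
    (g : Ordinal.{0} → P.Cond × SetName P) (i : Ordinal.{0}) (m : P.Cond × SetName P) : Prop :=
  P.le q m.1 ∧ (∀ j, j < i → P.le (g j).1 m.1) ∧ ForcesPos P D m.1 m.2 ∧
    ∀ j, j < i → ForcesSubsetMod P D m.1 m.2 ((g j).2)

def AuxLegalBelow {lam : Ordinal.{0}} (P : ForcingNotion) (D : NormalFilterOn lam) (q : P.Cond)
    (g : Ordinal.{0} → P.Cond × SetName P) (i : Ordinal.{0}) : Prop :=
  ∀ j, j < i → AuxLegal P D q g j (g j)

/-- `q ⊩ "player II has a winning strategy in Gm(D^Q,γ,a)"`. -/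
def ForcedIIWinsGm {lam : Ordinal.{0}} (P : ForcingNotion) (D : NormalFilterOn lam)
    (γ : Ordinal.{0}) (a : Set Ordinal.{0}) (q : P.Cond) : Prop :=
  ∃ S : Ordinal.{0} → (Ordinal.{0} → P.Cond × SetName P) → P.Cond × SetName P,
    ∀ g : Ordinal.{0} → P.Cond × SetName P,
      (∀ i, i < γ → i ∉ a → g i = S i (restrictAux P g i)) →
      (∀ i, i < γ → i ∈ a → AuxLegalBelow P D q g i → (∃ m, AuxLegal P D q g i m) →
        AuxLegal P D q g i (g i)) →
      ∀ i, i < γ → AuxLegalBelow P D q g i → AuxLegal P D q g i (g i)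

/-- `q ⊩ "player II has a winning strategy in Gm⁺(D^Q,γ,a)"`. -/
def ForcedIIWinsGmPlus {lam : Ordinal.{0}} (P : ForcingNotion) (D : NormalFilterOn lam)
    (γ : Ordinal.{0}) (a : Set Ordinal.{0}) (q : P.Cond) : Prop :=
  ∃ S : Ordinal.{0} → (Ordinal.{0} → P.Cond × SetName P) → P.Cond × SetName P,
    ∀ g : Ordinal.{0} → P.Cond × SetName P,
      (∀ i, i < γ → i ∉ a → g i = S i (restrictAux P g i)) →
      (∀ i, i < γ → i ∈ a → AuxLegalBelow P D q g i → (∃ m, AuxLegal P D q g i m) →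
        AuxLegal P D q g i (g i)) →
      (∀ i, i < γ → AuxLegalBelow P D q g i → AuxLegal P D q g i (g i)) ∧
      ((∀ i, i < γ → AuxLegal P D q g i (g i)) →
        ∃ s, (∀ j, j < γ → P.le (g j).1 s) ∧ ∃ x, ∀ j, j < γ → ForcesMem P s ((g j).2) x)

/-- `q ⊩ "player I has a winning strategy in Gm(D^Q,γ,a)"`. -/
def ForcedIWinsGm {lam : Ordinal.{0}} (P : ForcingNotion) (D : NormalFilterOn lam)
    (γ : Ordinal.{0}) (a : Set Ordinal.{0}) (q : P.Cond) : Prop :=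
  ∃ S : Ordinal.{0} → (Ordinal.{0} → P.Cond × SetName P) → P.Cond × SetName P,
    ∀ g : Ordinal.{0} → P.Cond × SetName P,
      (∀ i, i < γ → i ∈ a → g i = S i (restrictAux P g i)) →
      (∀ i, i < γ → i ∉ a → AuxLegalBelow P D q g i → (∃ m, AuxLegal P D q g i m) →
        AuxLegal P D q g i (g i)) →
      ∃ i, i < γ ∧ AuxLegalBelow P D q g i ∧ ¬ AuxLegal P D q g i (g i) ∧
        (i ∈ a → ¬ ∃ m, AuxLegal P D q g i m)

/-- `q ⊩ "player I has a winning strategy in Gm⁺(D^Q,γ,a)"`. -/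
def ForcedIWinsGmPlus {lam : Ordinal.{0}} (P : ForcingNotion) (D : NormalFilterOn lam)
    (γ : Ordinal.{0}) (a : Set Ordinal.{0}) (q : P.Cond) : Prop :=
  ∃ S : Ordinal.{0} → (Ordinal.{0} → P.Cond × SetName P) → P.Cond × SetName P,
    ∀ g : Ordinal.{0} → P.Cond × SetName P,
      (∀ i, i < γ → i ∈ a → g i = S i (restrictAux P g i)) →
      (∀ i, i < γ → i ∉ a → AuxLegalBelow P D q g i → (∃ m, AuxLegal P D q g i m) →
        AuxLegal P D q g i (g i)) →
      (∃ i, i < γ ∧ AuxLegalBelow P D q g i ∧ ¬ AuxLegal P D q g i (g i) ∧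
        (i ∈ a → ¬ ∃ m, AuxLegal P D q g i m)) ∨
      ¬ ∃ s, (∀ j, j < γ → P.le (g j).1 s) ∧ ∃ x, ∀ j, j < γ → ForcesMem P s ((g j).2) x

/-! ## Systems of conditions indexed by positive sets: the principles
`(*)³`, `(*)⁴`, `(*)⁶`, `(*)⁷` -/

/-- A sequence of conditions `p̄ = ⟨p_i : i ∈ T⟩` (first component: `T`). -/
def PSeq (P : ForcingNotion) : Type 1 := Set Ordinal.{0} × (Ordinal.{0} → P.Cond)

/-- The name `τ_p̄ = {i ∈ T : p_i ∈ G}`. -/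
def tauOf (P : ForcingNotion) (x : PSeq P) : SetName P :=
  fun i => {s | i ∈ x.1 ∧ P.le (x.2 i) s}

/-- `y` extends `x` in `K`:  `T_y ⊆ T_x` and `y` is coordinatewise stronger. -/
def KLe (P : ForcingNotion) (x y : PSeq P) : Prop :=
  y.1 ⊆ x.1 ∧ ∀ i ∈ y.1, P.le (x.2 i) (y.2 i)

/-- The principle `(*)³_{D,K,Q}` of Proposition 1.10. -/
def StarThree {lam : Ordinal.{0}} (P : ForcingNotion) (D : NormalFilterOn lam)
    (K : Set (PSeq P)) (kappa : Ordinal.{0}) : Prop :=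
  (∀ x ∈ K, D.pos x.1) ∧
  (∀ x ∈ K, ¬ ForcesNotPos P D P.one (tauOf P x)) ∧
  (∀ x ∈ K, ∀ T : SetName P, IsSetName P T →
      ¬ ForcesNotPos P D P.one (interName P T (tauOf P x)) →
      ∃ y ∈ K, KLe P x y ∧ ForcesSubset P P.one (tauOf P y) T) ∧
  ((∀ d, d < kappa → ∀ c : Ordinal.{0} → PSeq P, (∀ b, b < d → c b ∈ K) →
      (∀ b b', b ≤ b' → b' < d → KLe P (c b) (c b')) →
      D.pos {i : Ordinal.{0} | i < lam ∧ ∀ b, b < d → i ∈ (c b).1} →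
      ∃ y ∈ K, ∀ b, b < d → KLe P (c b) y) ∨
   (∀ d, d < kappa → ∀ c : Ordinal.{0} → PSeq P, (∀ b, b < d → c b ∈ K) →
      (∀ b b' i, b ≤ b' → b' < d → i ∈ (c b).1 → i ∈ (c b').1 →
        P.le ((c b).2 i) ((c b').2 i)) →
      D.pos {i : Ordinal.{0} | i < lam ∧ ∀ b, b < d → i ∈ (c b).1} →
      ∃ y ∈ K, y.1 ⊆ {i : Ordinal.{0} | i < lam ∧ ∀ b, b < d → i ∈ (c b).1} ∧
        ∀ b, b < d → ∀ i, i ∈ (c b).1 → i ∈ y.1 → P.le ((c b).2 i) (y.2 i))) ∧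
  (∀ (q : P.Cond) (τ : SetName P), IsSetName P τ → ForcesPos P D q τ →
      ∃ x ∈ K, (∀ i ∈ x.1, P.le q (x.2 i)) ∧ ForcesSubset P q (tauOf P x) τ) ∧
  ((Set.Iio lam, fun _ : Ordinal.{0} => P.one) ∈ K)

/-- The principle `(*)⁴_{D,K,Q}`. -/
def StarFour {lam : Ordinal.{0}} (P : ForcingNotion) (D : NormalFilterOn lam)
    (K : Set (PSeq P)) (kappa : Ordinal.{0}) : Prop :=
  StarThree P D K kappa ∧ ∀ x ∈ K, ∀ i ∈ x.1, ForcesPos P D (x.2 i) (tauOf P x)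

/-- The principle `(*)⁶_{D,K,Q}` of Proposition 1.11. -/
def StarSix {lam : Ordinal.{0}} (P : ForcingNotion) (D : NormalFilterOn lam)
    (K : Set (PSeq P)) : Prop :=
  (∀ x ∈ K, D.pos x.1) ∧
  (∀ (q : P.Cond) (T : Set Ordinal.{0}), D.pos T →
      ∃ x ∈ K, (∀ i, P.le q (x.2 i)) ∧ x.1 ⊆ T) ∧
  (∀ x ∈ K, ∀ i ∈ x.1, ForcesPos P D (x.2 i) (tauOf P x)) ∧
  (∀ x ∈ K, ∀ T', T' ⊆ x.1 → D.pos T' → ∀ qf : Ordinal.{0} → P.Cond,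
      (∀ i ∈ T', P.le (x.2 i) (qf i)) →
      ∃ y ∈ K, y.1 ⊆ T' ∧ ∀ i ∈ y.1, P.le (qf i) (y.2 i)) ∧
  (∀ (q : P.Cond) (τ : SetName P), IsSetName P τ → ForcesPos P D q τ →
      ∃ x ∈ K, (∀ i ∈ x.1, P.le q (x.2 i)) ∧ ForcesSubset P q (tauOf P x) τ) ∧
  ((Set.Iio lam, fun _ : Ordinal.{0} => P.one) ∈ K)

def Incompatible (P : ForcingNotion) (p q : P.Cond) : Prop := ¬ ∃ r, P.le p r ∧ P.le q r

/-- `P` satisfies the `lam`-c.c. -/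
def LamCC (P : ForcingNotion) (lam : Ordinal.{0}) : Prop :=
  ∀ A : Set P.Cond, (∀ p ∈ A, ∀ q ∈ A, p ≠ q → Incompatible P p q) → SizeLT A lam

/-- The principle `(*)⁷_{D,K,D₁,Q}` of Proposition 1.12. -/
def StarSeven {lam : Ordinal.{0}} (P : ForcingNotion) (D D1 : NormalFilterOn lam)
    (K : Set (PSeq P)) (kappa : Ordinal.{0}) : Prop :=
  (StarSix P D K ∨ StarThree P D K kappa) ∧
  ((∀ x ∈ K, D1.pos {d : Ordinal.{0} | d < lam ∧ ForcesStatIn P P.one (tauOf P x) d}) ∨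
   ((∀ x ∈ K, D1.pos {d : Ordinal.{0} | d < lam ∧ ¬ ForcesNonstatIn P P.one (tauOf P x) d}) ∧
     LamCC P lam))

/-- The principle `C_{D,D₁}` of Proposition 1.12. -/
def CDPrinciple {lam : Ordinal.{0}} (D D1 : NormalFilterOn lam) : Prop :=
  ∀ T, D.pos T → D1.pos {d : Ordinal.{0} | d < lam ∧ StatIn T d}

/-! ## The Levy collapse `Col(μ,<λ)` -/

structure IsLevyCond (mu lam : Ordinal.{0}) (f : Set (Ordinal.{0} × Ordinal.{0} × Ordinal.{0})) : Prop where
  func : ∀ a x b b', (a, x, b) ∈ f → (a, x, b') ∈ f → b = b'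
  dom_lt : ∀ a x b, (a, x, b) ∈ f → a < lam ∧ x < mu
  val_lt : ∀ a x b, (a, x, b) ∈ f → b < a
  small : f = ∅ ∨ SizeLT f mu

/-- The Levy collapse `Col(mu, <lam)`:  partial functions of size `< mu` on
`lam × mu` with `p(a,x) < a`, ordered by extension. -/
def LevyCollapse (mu lam : Ordinal.{0}) : ForcingNotion where
  Cond := {f : Set (Ordinal.{0} × Ordinal.{0} × Ordinal.{0}) // IsLevyCond mu lam f}
  le f g := f.1 ⊆ g.1
  le_refl _ := subset_rfl
  le_trans h1 h2 := h1.trans h2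
  one := ⟨∅, { func := fun _ _ _ _ h => absurd h (Set.notMem_empty _),
               dom_lt := fun _ _ _ h => absurd h (Set.notMem_empty _),
               val_lt := fun _ _ _ h => absurd h (Set.notMem_empty _),
               small := Or.inl rfl }⟩
  one_le _ := Set.empty_subset _

/-! ## Forcing with the positive sets of an ideal;  precipitousness
(well-foundedness of generic ultrapowers) and closure of generic ultrapowers -/

/-- Forcing with the `Pos`-positive subsets of `T`, ordered by inclusion. -/
def PosForcing (Pos : Set (Set Ordinal.{0})) (T : Set Ordinal.{0}) : ForcingNotion where
  Cond := {A : Set Ordinal.{0} // A = T ∨ (A ∈ Pos ∧ A ⊆ T)}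
  le A B := B.1 ⊆ A.1
  le_refl _ := subset_rfl
  le_trans h1 h2 := h2.trans h1
  one := ⟨T, Or.inl rfl⟩
  one_le p := by
    rcases p.2 with h | h
    · exact h.subset
    · exact h.2

/-- A name for an element of the generic ultrapower: a name of a ground-model
function (on ordinals). -/
def FnName (P : ForcingNotion) : Type 1 := (Ordinal.{0} → Ordinal.{0}) → Set P.Cond

def IsFnNameAbove (P : ForcingNotion) (q : P.Cond) (N : FnName P) : Prop :=
  (∀ g p r, p ∈ N g → P.le p r → r ∈ N g) ∧
  (∀ r, P.le q r → ∃ s, P.le r s ∧ ∃ g, s ∈ N g) ∧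
  (∀ g g' s, s ∈ N g → s ∈ N g' → g = g')

/-- The ideal with positive sets `Pos` (on the underlying set `T`) is
precipitous: no condition forces an infinite descending sequence in the
generic ultrapower. -/
def IdealPrecipitous (Pos : Set (Set Ordinal.{0})) (T : Set Ordinal.{0}) : Prop :=
  ¬ ∃ (q : (PosForcing Pos T).Cond) (N : ℕ → FnName (PosForcing Pos T)),
      (∀ n, IsFnNameAbove (PosForcing Pos T) q (N n)) ∧
      ∀ n, ∀ r, (PosForcing Pos T).le q r → ∃ s, (PosForcing Pos T).le r s ∧
        ∃ g g' : Ordinal.{0} → Ordinal.{0}, s ∈ N n g ∧ s ∈ N (n + 1) g' ∧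
          (s.1 ∩ {a : Ordinal.{0} | ¬ g' a < g a}) ∉ Pos

/-- The (well-founded) generic ultrapower is closed under sequences of length
`< kappa` of its elements in the generic extension. -/
def IdealUltraClosed (Pos : Set (Set Ordinal.{0})) (T : Set Ordinal.{0}) (kappa : Ordinal.{0}) : Prop :=
  ∀ (q : (PosForcing Pos T).Cond) (d : Ordinal.{0}), d < kappa →
    ∀ N : Ordinal.{0} → FnName (PosForcing Pos T),
      (∀ x, x < d → IsFnNameAbove (PosForcing Pos T) q (N x)) →
      ∀ r, (PosForcing Pos T).le q r → ∃ s, (PosForcing Pos T).le r s ∧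
        ∃ F : Ordinal.{0} → Ordinal.{0} → Ordinal.{0},
          ∀ x, x < d → ∀ t, (PosForcing Pos T).le s t →
            ∃ u, (PosForcing Pos T).le t u ∧ ∃ g, u ∈ N x g ∧
              (u.1 ∩ {a : Ordinal.{0} | F a x ≠ g a}) ∉ Pos

/-- Forcing with the positive sets preserves the cardinal `nu`. -/
def IdealPreservesCardinal (Pos : Set (Set Ordinal.{0})) (T : Set Ordinal.{0}) (nu : Ordinal.{0}) : Prop :=
  PreservesCardinalForced (PosForcing Pos T) nu

/-- The ideal is `nu`-preserving: precipitous, and forcing with the positive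
sets preserves the cardinal `nu` (Definition 1.4). -/
def IdealKappaPreserving (Pos : Set (Set Ordinal.{0})) (T : Set Ordinal.{0}) (nu : Ordinal.{0}) : Prop :=
  IdealPrecipitous Pos T ∧ IdealPreservesCardinal Pos T nu

/-! ## The nonstationary ideal and its cofinality restrictions -/

/-- The `NS_lam`-positive sets: the stationary subsets of `lam`. -/
def NSPos (lam : Ordinal.{0}) : Set (Set Ordinal.{0}) := {A | A ⊆ Set.Iio lam ∧ StatIn A lam}

def cofSet (lam : Ordinal.{0}) (m : Cardinal) : Set Ordinal.{0} := {x | x < lam ∧ x.cof = m}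

/-- The `NS_lam^m`-positive sets: stationary sets concentrating on cofinality `m`. -/
def NSPosCof (lam : Ordinal.{0}) (m : Cardinal) : Set (Set Ordinal.{0}) :=
  {A | A ⊆ cofSet lam m ∧ StatIn A lam}

/-! ## Repeat points and (abstract) core-model data -/

/-- `δ` is an up-repeat point for the sequence `⟨F β : β < γ⟩` (Definition 2.0(a)). -/
def IsUpRepeatPoint (F : Ordinal.{0} → Set (Set Ordinal.{0})) (γ δ : Ordinal.{0}) : Prop :=
  δ < γ ∧ ∀ A ∈ F δ, ∃ δ', δ < δ' ∧ δ' < γ ∧ A ∈ F δ'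

/-- `δ` is a `(lam, ρ)`-repeat point for `⟨F β : β < γ⟩` (Definition 2.0(b)). -/
def IsRepeatPoint (F : Ordinal.{0} → Set (Set Ordinal.{0})) (γ : Ordinal.{0}) (lam : Cardinal)
    (ρ δ : Ordinal.{0}) : Prop :=
  δ < γ ∧ δ.cof = lam ∧ ∀ A : Set Ordinal.{0},
    (∀ b, δ ≤ b → b < δ + ρ → A ∈ F b) →
    ∀ c, c < δ → ∃ ξ, c ≤ ξ ∧ ξ < δ ∧ ∀ ξ', ξ ≤ ξ' → ξ' < ξ + ρ → A ∈ F ξ'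

/-- `U` is a normal ultrafilter over `a`. -/
def IsNormalUltrafilterOn (a : Ordinal.{0}) (U : Set (Set Ordinal.{0})) : Prop :=
  (∃ D : NormalFilterOn a, D.sets = U) ∧
  ∀ X, X ⊆ Set.Iio a → X ∈ U ∨ (Set.Iio a \ X) ∈ U

/-- Abstract data for (the maximal sequence of measures `F⃗` of) the core model
`K(F⃗)`: the Mitchell order `o`, the measure sequence `seq`, and the predicate
"regular in `K(F⃗)`". -/
structure CoreModelData where
  o : Ordinal.{0} → Ordinal.{0}
  seq : Ordinal.{0} → Ordinal.{0} → Set (Set Ordinal.{0})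
  regularIn : Ordinal.{0} → Prop

/-! ### Auxiliary material for the proof of Lemma 1.13 -/

namespace GS113

open Ordinal

/-- Two partial functions (coded as sets of triples) conflict. -/
def Confl (c d : Set (Ordinal.{0} × Ordinal.{0} × Ordinal.{0})) : Prop :=
  ∃ a x b b', (a, x, b) ∈ c ∧ (a, x, b') ∈ d ∧ b ≠ b'

lemma ord_pos {c : Cardinal.{0}} (hc : ℵ₀ ≤ c) : (0 : Ordinal.{0}) < c.ord :=
  Cardinal.lt_ord.2 (by simpa using lt_of_lt_of_le Cardinal.aleph0_pos hc)

lemma lt_add_one' (a : Ordinal.{0}) : a < a + 1 := by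
  rw [Ordinal.add_one_eq_succ]; exact Order.lt_succ a

lemma add_one_lt_ord {c : Cardinal.{0}} (hc : ℵ₀ ≤ c) {a : Ordinal.{0}} (h : a < c.ord) :
    a + 1 < c.ord := by
  rw [Ordinal.add_one_eq_succ]; exact (Cardinal.isSuccLimit_ord hc).succ_lt h

/-- Bounding a small family of ordinals below a regular cardinal. -/
lemma hsup {c : Cardinal.{0}} (hc : c.IsRegular) {α : Type*} (A : Set α) (b : Ordinal.{0})
    (hb : b.card < c) (hA : SizeLE A b) (F : α → Ordinal.{0})
    (hF : ∀ a ∈ A, F a < c.ord) : ∃ β < c.ord, ∀ a ∈ A, F a < β := by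
  classical
  obtain ⟨g, hg1, hg2⟩ := hA
  have h0 : (0 : Ordinal.{0}) < c.ord := ord_pos hc.aleph0_le
  set f : b.ToType → Ordinal.{0} := fun t =>
    if h : ∃ a, a ∈ A ∧ g a = (((Ordinal.ToType.mk (o := b)).symm t : Set.Iio b) : Ordinal.{0})
    then F h.choose else 0 with hfdef
  have hflt : ∀ t, f t < c.ord := by
    intro t
    rw [hfdef]
    dsimp only
    split
    · next h => exact hF _ h.choose_spec.1
    · exact h0
  have hsup1 : iSup f < c.ord :=
    Cardinal.iSup_lt_ord_of_isRegular hc (by rw [Cardinal.mk_toType]; exact hb) hflt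
  refine ⟨iSup f + 1, add_one_lt_ord hc.aleph0_le hsup1, ?_⟩
  intro a ha
  have hga : g a < b := hg1 a ha
  set t := (Ordinal.ToType.mk (o := b)) ⟨g a, hga⟩ with ht
  have hex : ∃ a', a' ∈ A ∧
      g a' = (((Ordinal.ToType.mk (o := b)).symm t : Set.Iio b) : Ordinal.{0}) := by
    refine ⟨a, ha, ?_⟩
    rw [ht, OrderIso.symm_apply_apply]
  have hfa : f t = F a := by
    rw [hfdef]
    dsimp only
    rw [dif_pos hex]
    have h1 := hex.choose_spec
    have h2 : hex.choose = a := by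
      apply hg2 _ h1.1 _ ha
      rw [h1.2, ht, OrderIso.symm_apply_apply]
    rw [h2]
  calc F a = f t := hfa.symm
    _ ≤ iSup f := Ordinal.le_iSup f t
    _ < iSup f + 1 := lt_add_one' _

lemma sizeLE_of_mk_le {α : Type 1} (A : Set α) (v : Ordinal.{0})
    (h : #A ≤ Cardinal.lift.{1} v.card) : SizeLE A v := by
  classical
  rw [← Ordinal.mk_Iio_ordinal] at h
  obtain ⟨emb⟩ := Cardinal.le_def _ _ |>.1 h
  refine ⟨fun x => if hx : x ∈ A then (emb ⟨x, hx⟩ : Set.Iio v).1 else 0, ?_, ?_⟩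
  · intro x hx
    dsimp only
    rw [dif_pos hx]
    exact (emb ⟨x, hx⟩).2
  · intro x hx y hy hxy
    dsimp only at hxy
    rw [dif_pos hx, dif_pos hy] at hxy
    have := emb.injective (Subtype.ext hxy)
    exact congrArg Subtype.val this

lemma small_union {mu : Cardinal.{0}} (hmu : ℵ₀ ≤ mu) {α : Type*} {c d : Set α}
    (hc : c = ∅ ∨ SizeLT c mu.ord) (hd : d = ∅ ∨ SizeLT d mu.ord) :
    c ∪ d = ∅ ∨ SizeLT (c ∪ d) mu.ord := by
  classical
  rcases hc with rfl | ⟨b1, hb1, g1, hg11, hg12⟩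
  · simpa using hd
  rcases hd with rfl | ⟨b2, hb2, g2, hg21, hg22⟩
  · right
    rw [Set.union_empty]
    exact ⟨b1, hb1, g1, hg11, hg12⟩
  right
  refine ⟨b1 + b2, ?_, ⟨fun w => if w ∈ c then g1 w else b1 + g2 w, ?_, ?_⟩⟩
  · rw [Cardinal.lt_ord, Ordinal.card_add]
    exact Cardinal.add_lt_of_lt hmu (Cardinal.lt_ord.1 hb1) (Cardinal.lt_ord.1 hb2)
  · intro w hw
    dsimp only
    by_cases hwc : w ∈ c
    · rw [if_pos hwc]
      exact lt_of_lt_of_le (hg11 w hwc) le_self_add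
    · rw [if_neg hwc]
      exact add_lt_add_right (hg21 w (hw.resolve_left hwc)) _
  · intro x hx y hy hxy
    dsimp only at hxy
    by_cases hxc : x ∈ c <;> by_cases hyc : y ∈ c
    · rw [if_pos hxc, if_pos hyc] at hxy
      exact hg12 x hxc y hyc hxy
    · rw [if_pos hxc, if_neg hyc] at hxy
      exact absurd hxy (ne_of_lt (lt_of_lt_of_le (hg11 x hxc) le_self_add))
    · rw [if_neg hxc, if_pos hyc] at hxy
      exact absurd hxy.symm (ne_of_lt (lt_of_lt_of_le (hg11 y hyc) le_self_add))
    · rw [if_neg hxc, if_neg hyc] at hxy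
      exact hg22 x (hx.resolve_left hxc) y (hy.resolve_left hyc) ((add_right_inj b1).1 hxy)

lemma levy_union {mu lam : Cardinal.{0}} (hmu : ℵ₀ ≤ mu)
    {c d : Set (Ordinal.{0} × Ordinal.{0} × Ordinal.{0})}
    (hc : IsLevyCond mu.ord lam.ord c) (hd : IsLevyCond mu.ord lam.ord d)
    (h : ¬ Confl c d) : IsLevyCond mu.ord lam.ord (c ∪ d) := by
  constructor
  · intro a x b b' h1 h2
    rcases h1 with h1 | h1 <;> rcases h2 with h2 | h2
    · exact hc.func a x b b' h1 h2
    · by_contra hne; exact h ⟨a, x, b, b', h1, h2, hne⟩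
    · by_contra hne; exact h ⟨a, x, b', b, h2, h1, Ne.symm hne⟩
    · exact hd.func a x b b' h1 h2
  · intro a x b hb
    rcases hb with hb | hb
    exacts [hc.dom_lt a x b hb, hd.dom_lt a x b hb]
  · intro a x b hb
    rcases hb with hb | hb
    exacts [hc.val_lt a x b hb, hd.val_lt a x b hb]
  · exact small_union hmu hc.small hd.small

/-- μ-closure point: every subset of size `< μ` is bounded below `δ`. -/
def MuClPt (mu : Cardinal.{0}) (δ : Ordinal.{0}) : Prop :=
  ∀ A : Set Ordinal.{0}, A ⊆ Set.Iio δ → (∃ b < mu.ord, SizeLE A b) →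
    ∃ γ < δ, ∀ a ∈ A, a < γ

/-- There exist arbitrarily large `δ < λ` which are μ-closure points and
closure points of any given function `Φ`. -/
lemma exists_good {mu lam : Cardinal.{0}} (hmu : mu.IsRegular) (hlam : lam.IsRegular)
    (hml : mu < lam) (Φ : Ordinal.{0} → Ordinal.{0}) (hΦ : ∀ b, Φ b < lam.ord)
    (b0 : Ordinal.{0}) (hb0 : b0 < lam.ord) :
    ∃ δ, b0 < δ ∧ δ < lam.ord ∧ MuClPt mu δ ∧ ∀ b < δ, Φ b < δ := by
  classical
  have halam : ℵ₀ ≤ lam := hlam.aleph0_le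
  have hnxt : ∀ β, β < lam.ord → ∃ σ, β < σ ∧ σ < lam.ord ∧ ∀ b < β, Φ b < σ := by
    intro β hβ
    obtain ⟨β1, hβ1, hβ1p⟩ :=
      hsup hlam (Set.Iio β) β (Cardinal.lt_ord.1 hβ)
        ⟨id, fun x hx => hx, fun _ _ _ _ e => e⟩ Φ (fun a _ => hΦ a)
    refine ⟨max (β + 1) β1, ?_, ?_, ?_⟩
    · exact lt_of_lt_of_le (lt_add_one' β) (le_max_left _ _)
    · exact max_lt (add_one_lt_ord halam hβ) hβ1
    · intro b hb
      exact lt_of_lt_of_le (hβ1p b hb) (le_max_right _ _)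
  have hcp : ∀ β, β < lam.ord → ∃ σ, β < σ ∧ σ < lam.ord ∧ ∀ b < σ, Φ b < σ := by
    intro β hβ
    set nf : Ordinal.{0} → Ordinal.{0} :=
      fun x => if h : x < lam.ord then (hnxt x h).choose else 0 with hnf
    have hnf1 : ∀ x, x < lam.ord →
        x < nf x ∧ nf x < lam.ord ∧ ∀ b < x, Φ b < nf x := by
      intro x h
      rw [hnf]
      dsimp only
      rw [dif_pos h]
      exact (hnxt x h).choose_spec
    set it : ℕ → Ordinal.{0} := fun n => nf^[n] (β + 1) with hit
    have hβ1 : β + 1 < lam.ord := add_one_lt_ord halam hβ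
    have hsucc : ∀ n, it (n + 1) = nf (it n) := by
      intro n
      rw [hit]
      exact Function.iterate_succ_apply' nf n (β + 1)
    have hlt : ∀ n, it n < lam.ord := by
      intro n
      induction n with
      | zero => simpa [hit] using hβ1
      | succ n ih =>
        rw [hsucc n]
        exact (hnf1 _ ih).2.1
    refine ⟨⨆ n, it n, ?_, ?_, ?_⟩
    · have h0 : it 0 = β + 1 := by simp [hit]
      exact lt_of_lt_of_le (lt_add_one' β) (h0 ▸ Ordinal.le_iSup it 0)
    · exact Cardinal.iSup_lt_ord_of_isRegular hlam
        (by rw [Cardinal.mk_nat]; exact lt_of_le_of_lt hmu.aleph0_le hml) hlt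
    · intro b hb
      obtain ⟨n, hn⟩ := Ordinal.lt_iSup_iff.1 hb
      have h1 := (hnf1 (it n) (hlt n)).2.2 b hn
      calc Φ b < nf (it n) := h1
        _ = it (n + 1) := (hsucc n).symm
        _ ≤ ⨆ m, it m := Ordinal.le_iSup it (n + 1)
  set Z : Set Ordinal.{0} := {σ | b0 < σ ∧ ∀ b < σ, Φ b < σ} with hZ
  have hZunb : ¬ BddAbove Z := by
    rw [not_bddAbove_iff]
    intro β
    refine ⟨max (β + 1) (max (b0 + 1) lam.ord), ⟨?_, ?_⟩, ?_⟩
    · exact lt_of_lt_of_le (lt_add_one' b0) (le_trans (le_max_left _ _) (le_max_right _ _))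
    · intro b _
      exact lt_of_lt_of_le (hΦ b) (le_trans (le_max_right _ _) (le_max_right _ _))
    · exact lt_of_lt_of_le (lt_add_one' β) (le_max_left _ _)
  have henum : ∀ ξ, ξ < lam.ord → enumOrd Z ξ < lam.ord := by
    intro ξ
    induction ξ using Ordinal.induction with
    | h ξ IH =>
      intro hξ
      obtain ⟨β1, hβ1, hβ1p⟩ := hsup hlam (Set.Iio ξ) ξ (Cardinal.lt_ord.1 hξ)
        ⟨id, fun x hx => hx, fun _ _ _ _ e => e⟩ (Ordinal.enumOrd Z)
        (fun a ha => IH a ha (lt_trans ha hξ))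
      obtain ⟨σ, hσ1, hσ2, hσ3⟩ := hcp (max β1 (b0 + 1))
        (max_lt hβ1 (add_one_lt_ord halam hb0))
      have hσZ : σ ∈ Z :=
        ⟨lt_of_le_of_lt (le_trans (le_of_lt (lt_add_one' b0)) (le_max_right β1 (b0 + 1))) hσ1,
          hσ3⟩
      have hle := Ordinal.enumOrd_le_of_forall_lt hσZ
        (fun b hb => lt_trans (hβ1p b hb) (lt_of_le_of_lt (le_max_left _ _) hσ1))
      exact lt_of_le_of_lt hle hσ2
  have hmuord : mu.ord < lam.ord := Cardinal.ord_lt_ord.2 hml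
  set idx : mu.ord.ToType → Ordinal.{0} :=
    fun x => (((Ordinal.ToType.mk (o := mu.ord)).symm x : Set.Iio mu.ord) : Ordinal.{0})
    with hidxdef
  have hidx : ∀ x, idx x < mu.ord := fun x => ((Ordinal.ToType.mk (o := mu.ord)).symm x).2
  set e : mu.ord.ToType → Ordinal.{0} := fun x => Ordinal.enumOrd Z (idx x) with hedef
  have helt : ∀ x, e x < lam.ord := fun x => henum _ (lt_trans (hidx x) hmuord)
  have hexZ : ∀ x, e x ∈ Z := fun x => Ordinal.enumOrd_mem hZunb _
  have hidxsurj : ∀ X, X < mu.ord → ∃ x, idx x = X := by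
    intro X hX
    refine ⟨(Ordinal.ToType.mk (o := mu.ord)) ⟨X, hX⟩, ?_⟩
    rw [hidxdef]
    dsimp only
    rw [OrderIso.symm_apply_apply]
  have hδlt : (⨆ x, e x) < lam.ord := Cardinal.iSup_lt_ord_of_isRegular hlam
    (by rw [Cardinal.mk_toType, Cardinal.card_ord]; exact hml) helt
  have hne : Nonempty mu.ord.ToType :=
    Ordinal.nonempty_toType_iff.2 (ne_of_gt (ord_pos hmu.aleph0_le))
  refine ⟨⨆ x, e x, ?_, hδlt, ?_, ?_⟩
  · obtain ⟨x⟩ := hne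
    exact lt_of_lt_of_le (hexZ x).1 (Ordinal.le_iSup e x)
  · rintro A hA ⟨b, hb, hAb⟩
    have hchoice : ∀ a, a ∈ A → ∃ x, a < e x := fun a ha => Ordinal.lt_iSup_iff.1 (hA ha)
    set F : Ordinal.{0} → Ordinal.{0} :=
      fun a => if h : ∃ x, a < e x then idx h.choose else 0 with hFdef
    have hF : ∀ a ∈ A, F a < mu.ord ∧ a < Ordinal.enumOrd Z (F a) := by
      intro a ha
      have h := hchoice a ha
      rw [hFdef]
      dsimp only
      rw [dif_pos h]
      exact ⟨hidx _, h.choose_spec⟩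
    obtain ⟨X, hX, hXp⟩ := hsup hmu A b (Cardinal.lt_ord.1 hb) hAb F (fun a ha => (hF a ha).1)
    have hX1 : X + 1 < mu.ord := add_one_lt_ord hmu.aleph0_le hX
    obtain ⟨x', hx'⟩ := hidxsurj (X + 1) hX1
    refine ⟨Ordinal.enumOrd Z X, ?_, ?_⟩
    · calc Ordinal.enumOrd Z X < Ordinal.enumOrd Z (X + 1) :=
          (Ordinal.enumOrd_lt_enumOrd hZunb).2 (lt_add_one' X)
        _ = e x' := by rw [hedef]; dsimp only; rw [hx']
        _ ≤ ⨆ x, e x := Ordinal.le_iSup e x'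
    · intro a ha
      exact lt_trans (hF a ha).2 ((Ordinal.enumOrd_lt_enumOrd hZunb).2 (hXp a ha))
  · intro b hb
    obtain ⟨x, hx⟩ := Ordinal.lt_iSup_iff.1 hb
    exact lt_of_lt_of_le ((hexZ x).2 b hx) (Ordinal.le_iSup e x)

/-- Every Levy condition has all first coordinates bounded below `λ`. -/
lemma cond_bound {mu lam : Cardinal.{0}} (hlam : lam.IsRegular) (hml : mu < lam)
    {c : Set (Ordinal.{0} × Ordinal.{0} × Ordinal.{0})}
    (hc : IsLevyCond mu.ord lam.ord c) :
    ∃ ρ < lam.ord, ∀ w ∈ c, w.1 < ρ := by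
  rcases hc.small with h | ⟨b, hb, hg⟩
  · refine ⟨1, ?_, ?_⟩
    · rw [Cardinal.lt_ord, Ordinal.card_one]
      exact lt_of_lt_of_le Cardinal.one_lt_aleph0 hlam.aleph0_le
    · intro w hw
      rw [h] at hw
      exact absurd hw (Set.notMem_empty w)
  · have hblam : b.card < lam := by
      have : b < lam.ord := lt_trans hb (Cardinal.ord_lt_ord.2 hml)
      exact Cardinal.lt_ord.1 this
    exact hsup hlam c b hblam hg (fun w => w.1)
      (fun w hw => (hc.dom_lt w.1 w.2.1 w.2.2 hw).1)

/-- The λ-c.c. of the Levy collapse, in the form needed: there is no family of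
pairwise conflicting conditions indexed by an unbounded subset of `λ`. -/
lemma no_big_antichain {mu lam : Cardinal.{0}} (hmu : mu.IsRegular)
    (hlam : lam.IsInaccessible) (hml : mu < lam) (S : Set Ordinal.{0})
    (hSunb : ∀ b < lam.ord, ∃ i ∈ S, b < i ∧ i < lam.ord)
    (q : Ordinal.{0} → (LevyCollapse mu.ord lam.ord).Cond)
    (hconf : ∀ i ∈ S, ∀ j ∈ S, i < j → Confl (q i).1 (q j).1) : False := by
  classical
  have hreg : lam.IsRegular := hlam.isRegular
  obtain ⟨halam, -, hsl⟩ := hlam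
  -- a choice of elements of S above any point
  set sf : Ordinal.{0} → Ordinal.{0} :=
    fun δ => if h : δ < lam.ord then (hSunb δ h).choose else 0 with hsfdef
  have hsf1 : ∀ δ, δ < lam.ord → sf δ ∈ S ∧ δ < sf δ ∧ sf δ < lam.ord := by
    intro δ h
    rw [hsfdef]
    dsimp only
    rw [dif_pos h]
    exact (hSunb δ h).choose_spec
  -- bound functions for the conditions
  have hbnd : ∀ i, ∃ ρ < lam.ord, ∀ w ∈ (q i).1, w.1 < ρ :=
    fun i => cond_bound hreg hml (q i).2
  set bf : Ordinal.{0} → Ordinal.{0} := fun i => (hbnd i).choose with hbfdef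
  have hbf : ∀ i, bf i < lam.ord ∧ ∀ w ∈ (q i).1, w.1 < bf i := by
    intro i
    rw [hbfdef]
    exact (hbnd i).choose_spec
  -- traces
  set tr : Ordinal.{0} → Set (Ordinal.{0} × Ordinal.{0} × Ordinal.{0}) :=
    fun δ => {w | w ∈ (q (sf δ)).1 ∧ w.1 < δ} with htrdef
  -- bounding the trace below a μ-closure point
  have hβ : ∀ δ, MuClPt mu δ → 0 < δ → δ < lam.ord → ∃ γ < δ, ∀ w ∈ tr δ, w.1 < γ := by
    intro δ hMu h0 hδ
    rcases (q (sf δ)).2.small with he | ⟨b, hb, g, hg1, hg2⟩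
    · refine ⟨0, h0, ?_⟩
      intro w hw
      have : w ∈ (q (sf δ)).1 := hw.1
      rw [he] at this
      exact absurd this (Set.notMem_empty w)
    · have himg : ∃ γ < δ, ∀ a ∈ Prod.fst '' tr δ, a < γ := by
        apply hMu
        · rintro a ⟨w, hw, rfl⟩
          exact hw.2
        · refine ⟨b, hb, fun a => if h : ∃ w, w ∈ tr δ ∧ w.1 = a then g h.choose else 0,
            ?_, ?_⟩
          · intro a ha
            dsimp only
            rw [Set.mem_image] at ha
            obtain ⟨w, hw, hwa⟩ := ha
            have hex : ∃ w, w ∈ tr δ ∧ w.1 = a := ⟨w, hw, hwa⟩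
            rw [dif_pos hex]
            exact hg1 _ hex.choose_spec.1.1
          · intro a ha a' ha' haa
            dsimp only at haa
            rw [Set.mem_image] at ha ha'
            obtain ⟨w, hw, hwa⟩ := ha
            obtain ⟨w', hw', hwa'⟩ := ha'
            have hex : ∃ u, u ∈ tr δ ∧ u.1 = a := ⟨w, hw, hwa⟩
            have hex' : ∃ u, u ∈ tr δ ∧ u.1 = a' := ⟨w', hw', hwa'⟩
            rw [dif_pos hex, dif_pos hex'] at haa
            have := hg2 _ hex.choose_spec.1.1 _ hex'.choose_spec.1.1 haa
            rw [← hex.choose_spec.2, ← hex'.choose_spec.2, this]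
      obtain ⟨γ, hγ, hγp⟩ := himg
      exact ⟨γ, hγ, fun w hw => hγp w.1 (Set.mem_image_of_mem Prod.fst hw)⟩
  set βf : Ordinal.{0} → Ordinal.{0} :=
    fun δ => if h : MuClPt mu δ ∧ 0 < δ ∧ δ < lam.ord
      then (hβ δ h.1 h.2.1 h.2.2).choose else 0 with hβfdef
  have hβf : ∀ δ, (h : MuClPt mu δ ∧ 0 < δ ∧ δ < lam.ord) →
      βf δ < δ ∧ ∀ w ∈ tr δ, w.1 < βf δ := by
    intro δ h
    rw [hβfdef]
    dsimp only
    rw [dif_pos h]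
    exact (hβ δ h.1 h.2.1 h.2.2).choose_spec
  -- Fodor-style argument: some value of βf is attained unboundedly often
  have fodor : ∃ γ < lam.ord, ∀ b0 < lam.ord,
      ∃ δ, b0 < δ ∧ δ < lam.ord ∧ MuClPt mu δ ∧ βf δ = γ := by
    by_contra hcon
    push_neg at hcon
    set Φ : Ordinal.{0} → Ordinal.{0} :=
      fun γ => if h : γ < lam.ord then (hcon γ h).choose else 0 with hΦdef
    have hΦlt : ∀ γ, Φ γ < lam.ord := by
      intro γ
      rw [hΦdef]
      dsimp only
      split
      · next h => exact (hcon γ h).choose_spec.1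
      · exact ord_pos hreg.aleph0_le
    obtain ⟨δ, hδ0, hδlam, hδMu, hδcl⟩ :=
      exists_good hmu hreg hml Φ hΦlt 0 (ord_pos hreg.aleph0_le)
    have h1 := hβf δ ⟨hδMu, hδ0, hδlam⟩
    have hγ : βf δ < lam.ord := lt_trans h1.1 hδlam
    have hΦγ : Φ (βf δ) = (hcon (βf δ) hγ).choose := by
      rw [hΦdef]
      dsimp only
      rw [dif_pos hγ]
    have h2 := (hcon (βf δ) hγ).choose_spec.2 δ
      (by rw [← hΦγ]; exact hδcl (βf δ) h1.1) hδlam hδMu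
    exact h2 rfl
  obtain ⟨γ, hγlam, hU⟩ := fodor
  -- counting the candidate traces
  set W : Set (Ordinal.{0} × Ordinal.{0} × Ordinal.{0}) :=
    {w | w.1 < γ ∧ w.2.1 < mu.ord ∧ w.2.2 < γ} with hWdef
  have hWmk : #W ≤ Cardinal.lift.{1} (γ.card * (mu * γ.card)) := by
    have h1 : #W ≤ #(Set.Iio γ × Set.Iio mu.ord × Set.Iio γ) := by
      apply Cardinal.mk_le_of_injective (f := fun w : W =>
        ((⟨w.1.1, w.2.1⟩ : Set.Iio γ), (⟨w.1.2.1, w.2.2.1⟩ : Set.Iio mu.ord),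
          (⟨w.1.2.2, w.2.2.2⟩ : Set.Iio γ)))
      intro w w' h
      apply Subtype.ext
      have e1 := congrArg (fun z => (z.1 : Ordinal.{0})) h
      have e2 := congrArg (fun z => (z.2.1 : Ordinal.{0})) h
      have e3 := congrArg (fun z => (z.2.2 : Ordinal.{0})) h
      dsimp only at e1 e2 e3
      exact Prod.ext e1 (Prod.ext e2 e3)
    have h2 : #(Set.Iio γ × Set.Iio mu.ord × Set.Iio γ)
        = Cardinal.lift.{1} (γ.card * (mu * γ.card)) := by
      simp [Cardinal.mk_prod, Ordinal.mk_Iio_ordinal, Cardinal.lift_id',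
        Cardinal.card_ord, Cardinal.lift_mul]
    exact h1.trans (le_of_eq h2)
  have hw1lam : γ.card * (mu * γ.card) < lam := by
    have hγc : γ.card < lam := Cardinal.lt_ord.1 hγlam
    exact Cardinal.mul_lt_of_lt hreg.aleph0_le hγc
      (Cardinal.mul_lt_of_lt hreg.aleph0_le hml hγc)
  set v : Ordinal.{0} := (((2 : Cardinal.{0}) ^ (γ.card * (mu * γ.card))) : Cardinal.{0}).ord with hvdef
  have hvcard : v.card < lam := by
    rw [hvdef, Cardinal.card_ord]
    exact hsl hw1lam
  have hPW : SizeLE {t : Set (Ordinal.{0} × Ordinal.{0} × Ordinal.{0}) | t ⊆ W} v := by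
    apply sizeLE_of_mk_le
    rw [hvdef, Cardinal.card_ord]
    calc #{t : Set (Ordinal.{0} × Ordinal.{0} × Ordinal.{0}) | t ⊆ W}
        = 2 ^ #W := Cardinal.mk_powerset W
      _ ≤ 2 ^ Cardinal.lift.{1} (γ.card * (mu * γ.card)) :=
          Cardinal.power_le_power_left two_ne_zero hWmk
      _ = Cardinal.lift.{1} ((2 : Cardinal.{0}) ^ (γ.card * (mu * γ.card))) := by
          rw [Cardinal.lift_two_power]
  -- a single trace value attained unboundedly often
  have fib : ∃ t, t ⊆ W ∧ ∀ b0 < lam.ord,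
      ∃ δ, b0 < δ ∧ δ < lam.ord ∧ MuClPt mu δ ∧ βf δ = γ ∧ tr δ = t := by
    by_contra hcon
    push_neg at hcon
    set h : Set (Ordinal.{0} × Ordinal.{0} × Ordinal.{0}) → Ordinal.{0} :=
      fun t => if ht : t ⊆ W then (hcon t ht).choose else 0 with hhdef
    have hh : ∀ t, h t < lam.ord := by
      intro t
      rw [hhdef]
      dsimp only
      split
      · next ht => exact (hcon t ht).choose_spec.1
      · exact ord_pos hreg.aleph0_le
    obtain ⟨β, hβlam, hβp⟩ := hsup hreg
      {t : Set (Ordinal.{0} × Ordinal.{0} × Ordinal.{0}) | t ⊆ W} v hvcard hPW h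
      (fun t _ => hh t)
    obtain ⟨δ, h1, h2, h3, h4⟩ := hU β hβlam
    have h0δ : 0 < δ := lt_of_le_of_lt zero_le h1
    have hβδ := hβf δ ⟨h3, h0δ, h2⟩
    have htrW : tr δ ⊆ W := by
      intro w hw
      refine ⟨?_, ?_, ?_⟩
      · rw [← h4]
        exact hβδ.2 w hw
      · exact ((q (sf δ)).2.dom_lt w.1 w.2.1 w.2.2 hw.1).2
      · calc w.2.2 < w.1 := (q (sf δ)).2.val_lt w.1 w.2.1 w.2.2 hw.1
          _ < γ := by rw [← h4]; exact hβδ.2 w hw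
    have hht : h (tr δ) = (hcon (tr δ) htrW).choose := by
      rw [hhdef]
      dsimp only
      rw [dif_pos htrW]
    have hchlt : (hcon (tr δ) htrW).choose < δ := by
      rw [← hht]
      exact lt_trans (hβp (tr δ) htrW) h1
    exact (hcon (tr δ) htrW).choose_spec.2 δ hchlt h2 h3 h4 rfl
  obtain ⟨t, htW, hUt⟩ := fib
  -- the final contradiction: two compatible members of the antichain
  obtain ⟨δ, hδ1, hδ2, hδ3, hδ4, hδ5⟩ := hUt 0 (ord_pos hreg.aleph0_le)
  have hi := hsf1 δ hδ2
  have hbi := hbf (sf δ)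
  obtain ⟨δ', h1', h2', h3', h4', h5'⟩ := hUt (max (sf δ) (bf (sf δ)))
    (max_lt hi.2.2 hbi.1)
  have hj := hsf1 δ' h2'
  have hij : sf δ < sf δ' :=
    lt_trans (lt_of_le_of_lt (le_max_left _ _) h1') hj.2.1
  obtain ⟨a, x, b, b', hmem1, hmem2, hbb⟩ := hconf (sf δ) hi.1 (sf δ') hj.1 hij
  have ha : a < δ' := lt_trans
    (lt_of_lt_of_le (hbi.2 (a, x, b) hmem1) (by exact le_max_right (sf δ) (bf (sf δ)))) h1'
  have hmem2' : (a, x, b') ∈ tr δ' := ⟨hmem2, ha⟩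
  rw [h5', ← hδ5] at hmem2'
  exact hbb ((q (sf δ)).2.func a x b b' hmem1 hmem2'.1)

end GS113

/-! ### Statement 8 (Lemma 1.13) -/

/-- Lemma 1.13:  Suppose `μ` is regular, `λ > μ` is inaccessible,
`Q = Col(μ,<λ)` and `D` is a normal filter on `λ`.  Let `T ∈ D⁺` and let
`p̄ = ⟨p_i : i ∈ T⟩` be a sequence of conditions in `Q`.  Then there is `C ∈ D`
such that for every `i ∈ T ∩ C`, `p_i ⊩ τ_p̄ ∈ (D^Q)⁺`, where
`τ_p̄ = {i : p_i ∈ G}`. -/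
theorem lemma_1_13 (mu lam : Cardinal) (hmu : mu.IsRegular) (hlam : lam.IsInaccessible)
    (hml : mu < lam)
    (D : NormalFilterOn lam.ord)
    (T : Set Ordinal.{0}) (hT : D.pos T)
    (p : Ordinal.{0} → (LevyCollapse mu.ord lam.ord).Cond) :
    ∃ C ∈ D.sets, ∀ i ∈ T ∩ C,
      ForcesPos (LevyCollapse mu.ord lam.ord) D (p i)
        (tauOf (LevyCollapse mu.ord lam.ord) (T, p)) := by
  classical
  have halam : ℵ₀ ≤ lam := hlam.isRegular.aleph0_le
  have h0lam : (0 : Ordinal.{0}) < lam.ord := GS113.ord_pos halam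
  have hIio : Set.Iio lam.ord ∈ D.sets := by
    have htail := D.tail_mem 0 h0lam
    exact D.superset_mem _ htail _ (fun x hx => hx) (fun x hx => hx.2)
  have hposne : ∀ A, D.pos A → A.Nonempty := by
    intro A hA
    rcases Set.eq_empty_or_nonempty A with rfl | h
    · have h2 := hA.2
      rw [Set.diff_empty] at h2
      exact absurd hIio h2
    · exact h
  have hposinter : ∀ A, D.pos A → ∀ C ∈ D.sets, D.pos (A ∩ C) := by
    intro A hA C hC
    refine ⟨fun x hx => hA.1 hx.1, ?_⟩
    intro hmem
    have h1 : (Set.Iio lam.ord \ (A ∩ C)) ∩ C ∈ D.sets := D.inter_mem _ hmem _ hC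
    have h2 : (Set.Iio lam.ord \ (A ∩ C)) ∩ C ⊆ Set.Iio lam.ord \ A := by
      rintro x ⟨⟨hx1, hx2⟩, hx3⟩
      exact ⟨hx1, fun hxA => hx2 ⟨hxA, hx3⟩⟩
    exact hA.2 (D.superset_mem _ h1 _ (fun x hx => hx.1) h2)
  set B := {i | i ∈ T ∧ ¬ ForcesPos (LevyCollapse mu.ord lam.ord) D (p i) (tauOf (LevyCollapse mu.ord lam.ord) (T, p))} with hBdef
  have hgood : ∀ i ∈ T ∩ (Set.Iio lam.ord \ B), ForcesPos (LevyCollapse mu.ord lam.ord) D (p i) (tauOf (LevyCollapse mu.ord lam.ord) (T, p)) := by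
    intro i hi
    by_contra hni
    exact hi.2.2 ⟨hi.1, hni⟩
  refine ⟨Set.Iio lam.ord \ B, ?_, hgood⟩
  by_contra hB'
  have hBpos : D.pos B := ⟨fun x hx => hT.1 hx.1, hB'⟩
  have hwit : ∀ i ∈ B, ∃ C, C ∈ D.sets ∧ ∃ r, (LevyCollapse mu.ord lam.ord).le (p i) r ∧
      ∀ s, (LevyCollapse mu.ord lam.ord).le r s → ∀ j ∈ C, ¬ ForcesMem (LevyCollapse mu.ord lam.ord) s (tauOf (LevyCollapse mu.ord lam.ord) (T, p)) j := by
    intro i hi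
    have h : ¬ (∀ C ∈ D.sets, ∀ r, (LevyCollapse mu.ord lam.ord).le (p i) r →
        ∃ s, (LevyCollapse mu.ord lam.ord).le r s ∧ ∃ j ∈ C, ForcesMem (LevyCollapse mu.ord lam.ord) s (tauOf (LevyCollapse mu.ord lam.ord) (T, p)) j) := hi.2
    push_neg at h
    obtain ⟨C, hC, r, hr, hrs⟩ := h
    exact ⟨C, hC, r, hr, hrs⟩
  set Cc : Ordinal.{0} → Set Ordinal.{0} :=
    fun i => if h : i ∈ B then (hwit i h).choose else Set.Iio lam.ord with hCcdef
  set rr : Ordinal.{0} → (LevyCollapse mu.ord lam.ord).Cond :=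
    fun i => if h : i ∈ B then (hwit i h).choose_spec.2.choose else p i with hrrdef
  have hCc : ∀ i, Cc i ∈ D.sets := by
    intro i
    rw [hCcdef]
    dsimp only
    split
    · next h => exact (hwit i h).choose_spec.1
    · exact hIio
  have hrr : ∀ i, (h : i ∈ B) → (LevyCollapse mu.ord lam.ord).le (p i) (rr i) ∧
      ∀ s, (LevyCollapse mu.ord lam.ord).le (rr i) s → ∀ j ∈ Cc i, ¬ ForcesMem (LevyCollapse mu.ord lam.ord) s (tauOf (LevyCollapse mu.ord lam.ord) (T, p)) j := by
    intro i hi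
    have hC : Cc i = (hwit i hi).choose := by
      rw [hCcdef]; dsimp only; rw [dif_pos hi]
    have hr : rr i = (hwit i hi).choose_spec.2.choose := by
      rw [hrrdef]; dsimp only; rw [dif_pos hi]
    rw [hC, hr]
    exact (hwit i hi).choose_spec.2.choose_spec
  set Δ := {x : Ordinal.{0} | x < lam.ord ∧ ∀ i, i < x → x ∈ Cc i} with hΔdef
  have hΔD : Δ ∈ D.sets := D.diagonal Cc (fun i _ => hCc i)
  set S := B ∩ Δ with hSdef
  have hSpos : D.pos S := hposinter B hBpos Δ hΔD
  have hSunb : ∀ b < lam.ord, ∃ i ∈ S, b < i ∧ i < lam.ord := by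
    intro b hb
    have hb1 : b + 1 < lam.ord := GS113.add_one_lt_ord halam hb
    obtain ⟨x, hx⟩ := hposne _ (hposinter S hSpos _ (D.tail_mem (b + 1) hb1))
    exact ⟨x, hx.1, lt_of_lt_of_le (GS113.lt_add_one' b) hx.2.1, hx.2.2⟩
  have hconf : ∀ i ∈ S, ∀ j ∈ S, i < j → GS113.Confl (rr i).1 (rr j).1 := by
    intro i hi j hj hij
    have hiB : i ∈ B := hi.1
    have hjB : j ∈ B := hj.1
    have hjCi : j ∈ Cc i := hj.2.2 i hij
    have hkey : GS113.Confl (rr i).1 (p j).1 := by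
      by_contra hnc
      have hu : IsLevyCond mu.ord lam.ord ((rr i).1 ∪ (p j).1) :=
        GS113.levy_union hmu.aleph0_le (rr i).2 (p j).2 hnc
      have hle : (LevyCollapse mu.ord lam.ord).le (rr i) (⟨_, hu⟩ : (LevyCollapse mu.ord lam.ord).Cond) := Set.subset_union_left
      have hle2 : (LevyCollapse mu.ord lam.ord).le (p j) (⟨_, hu⟩ : (LevyCollapse mu.ord lam.ord).Cond) := Set.subset_union_right
      have hmem : ForcesMem (LevyCollapse mu.ord lam.ord) (⟨_, hu⟩ : (LevyCollapse mu.ord lam.ord).Cond) (tauOf (LevyCollapse mu.ord lam.ord) (T, p)) j := by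
        intro t ht
        exact ⟨t, (LevyCollapse mu.ord lam.ord).le_refl t, hjB.1, (LevyCollapse mu.ord lam.ord).le_trans hle2 ht⟩
      exact (hrr i hiB).2 _ hle j hjCi hmem
    obtain ⟨a, x, b, b', h1, h2, hne⟩ := hkey
    have hple : (p j).1 ⊆ (rr j).1 := (hrr j hjB).1
    exact ⟨a, x, b, b', h1, hple h2, hne⟩
  exact GS113.no_big_antichain hmu hlam hml S hSunb rr hconf
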